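/- For every real $\beta>0$: $\displaystyle\int_{\mathbb{R}^2}2\beta^2\,\frac{|y|^{\beta-2}}{(1+|y|^{\beta})^{2}}\,\frac{1-|y|^{\beta}}{1+|y|^{\beta}}\,\log\bigl(1+|y|^{\beta}\bigr)\,dy=-2\pi\beta$. -/

import Mathlib

open Real Set MeasureTheory Filter Topology

private lemma aux_deriv (x : ℝ) (hx : x ∈ Ici (0:ℝ)) :
    HasDerivAt (fun u : ℝ => Real.log (1+u) * ((1+u)⁻¹ - ((1+u)^2)⁻¹)
        + ((1+u)⁻¹ - ((1+u)^2)⁻¹ / 2))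
      ((1-x)/(1+x)^3 * Real.log (1+x)) x := by
  have h0 : (0:ℝ) < 1 + x := by have := hx.out; linarith
  have h1 : HasDerivAt (fun u : ℝ => 1 + u) 1 x := by
    simpa using (hasDerivAt_id x).const_add 1
  have hlog : HasDerivAt (fun u : ℝ => Real.log (1+u)) (1+x)⁻¹ x := by
    have := (Real.hasDerivAt_log h0.ne').comp x h1; rw [mul_one] at this; exact this
  have hinv : HasDerivAt (fun u : ℝ => (1+u)⁻¹) (-((1+x)^2)⁻¹) x := by
    have := (hasDerivAt_inv h0.ne').comp x h1; rw [mul_one] at this; exact this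
  have hsq : HasDerivAt (fun u : ℝ => (1+u)^2) (2*(1+x)) x := by
    simpa [mul_comm] using (h1.fun_pow 2)
  have hinv2 : HasDerivAt (fun u : ℝ => ((1+u)^2)⁻¹) (-(2*(1+x)) / ((1+x)^2)^2) x := by
    exact hsq.inv (by positivity)
  have := ((hlog.fun_mul (hinv.fun_sub hinv2)).fun_add (hinv.fun_sub (hinv2.div_const 2)))
  refine this.congr_deriv ?_
  field_simp
  ring

private lemma aux_tendsto :
    Tendsto (fun u : ℝ => Real.log (1+u) * ((1+u)⁻¹ - ((1+u)^2)⁻¹)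
        + ((1+u)⁻¹ - ((1+u)^2)⁻¹ / 2)) atTop (𝓝 0) := by
  have hL : Tendsto (fun t : ℝ => Real.log t * t⁻¹) atTop (𝓝 0) := by
    simpa [div_eq_mul_inv] using Real.isLittleO_log_id_atTop.tendsto_div_nhds_zero
  have hI : Tendsto (fun t : ℝ => t⁻¹) atTop (𝓝 (0:ℝ)) := tendsto_inv_atTop_zero
  have hG : Tendsto (fun t : ℝ => Real.log t * (t⁻¹ - (t^2)⁻¹) + (t⁻¹ - (t^2)⁻¹/2))
      atTop (𝓝 0) := by
    have : (fun t : ℝ => Real.log t * (t⁻¹ - (t^2)⁻¹) + (t⁻¹ - (t^2)⁻¹/2))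
        = fun t : ℝ => (Real.log t * t⁻¹ - (Real.log t * t⁻¹) * t⁻¹)
            + (t⁻¹ - t⁻¹ * t⁻¹ / 2) := by
      funext t; rw [sq, mul_inv]; ring
    rw [this]
    have := ((hL.sub (hL.mul hI)).add (hI.sub ((hI.mul hI).div_const 2)))
    simpa using this
  have hcomp : Tendsto (fun u : ℝ => 1 + u) atTop atTop :=
    tendsto_atTop_add_const_left _ 1 tendsto_id
  exact hG.comp hcomp

private lemma aux_cont : ∀ x ∈ Ici (0:ℝ), ContinuousAt (fun u : ℝ => (1-u)/(1+u)^3 * Real.log (1+u)) x := by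
  intro x hx
  have h0 : (0:ℝ) < 1 + x := by have := hx.out; linarith
  exact ((continuousAt_const.sub continuousAt_id).div
      ((continuousAt_const.add continuousAt_id).pow 3) (pow_pos h0 3).ne').mul
    ((Real.continuousAt_log h0.ne').comp (continuousAt_const.add continuousAt_id))

private lemma aux_int : IntegrableOn (fun u : ℝ => (1-u)/(1+u)^3 * Real.log (1+u)) (Ioi (0:ℝ)) := by
  have hc : ContinuousOn (fun u : ℝ => (1-u)/(1+u)^3 * Real.log (1+u)) (Ici (0:ℝ)) :=
    fun x hx => (aux_cont x hx).continuousWithinAt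
  rw [← Ioc_union_Ioi_eq_Ioi (zero_le_one)]
  apply IntegrableOn.union
  · exact (hc.mono (Icc_subset_Ici_self)).integrableOn_compact isCompact_Icc |>.mono_set
      Ioc_subset_Icc_self
  · have hg : IntegrableOn (fun x : ℝ => 2 * x ^ (-(3/2) : ℝ)) (Ioi (1:ℝ)) :=
      (integrableOn_Ioi_rpow_of_lt (by norm_num) one_pos).const_mul 2
    refine Integrable.mono hg ((hc.mono (fun x hx => le_of_lt (lt_trans one_pos (mem_Ioi.mp hx)))).aestronglyMeasurable measurableSet_Ioi) ?_
    refine (ae_restrict_iff' measurableSet_Ioi).2 (ae_of_all _ fun x hx => ?_)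
    have hx1 : (1:ℝ) < x := hx
    have h0 : (0:ℝ) < 1 + x := by linarith
    have hlogpos : 0 ≤ Real.log (1+x) := Real.log_nonneg (by linarith)
    have hlog : Real.log (1+x) ≤ 2 * (1+x) ^ ((1:ℝ)/2) := by
      have h := Real.log_le_rpow_div h0.le (by norm_num : (0:ℝ) < 1/2)
      linarith [h]
    have hnorm : ‖(1-x)/(1+x)^3 * Real.log (1+x)‖
        = (x-1)/(1+x)^3 * Real.log (1+x) := by
      rw [norm_mul, Real.norm_eq_abs, Real.norm_eq_abs, abs_of_nonneg hlogpos,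
        abs_div, abs_of_nonneg (by positivity : (0:ℝ) ≤ (1+x)^3)]
      rw [abs_of_nonpos (by linarith : (1-x) ≤ 0)]
      ring_nf
    rw [hnorm]
    have step1 : (x-1)/(1+x)^3 * Real.log (1+x) ≤ (1+x)^((-2:ℝ)) * Real.log (1+x) := by
      apply mul_le_mul_of_nonneg_right _ hlogpos
      rw [Real.rpow_neg h0.le, show ((2:ℝ)) = ((2:ℕ):ℝ) by norm_num, Real.rpow_natCast]
      rw [div_le_iff₀ (by positivity)]
      rw [inv_mul_eq_div, le_div_iff₀ (by positivity)]
      nlinarith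
    have step2 : (1+x)^((-2:ℝ)) * Real.log (1+x) ≤ 2 * (1+x) ^ (-(3/2) : ℝ) := by
      calc (1+x)^((-2:ℝ)) * Real.log (1+x)
          ≤ (1+x)^((-2:ℝ)) * (2 * (1+x) ^ ((1:ℝ)/2)) :=
            mul_le_mul_of_nonneg_left hlog (Real.rpow_nonneg h0.le _)
        _ = 2 * (1+x) ^ (-(3/2) : ℝ) := by
            rw [mul_comm, mul_assoc, ← Real.rpow_add h0]; norm_num
    have step3 : (2:ℝ) * (1+x) ^ (-(3/2) : ℝ) ≤ 2 * x ^ (-(3/2) : ℝ) := by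
      apply mul_le_mul_of_nonneg_left _ (by norm_num)
      exact Real.rpow_le_rpow_of_nonpos (by linarith) (by linarith) (by norm_num)
    have : ‖2 * x ^ (-(3/2) : ℝ)‖ = 2 * x ^ (-(3/2) : ℝ) := by
      rw [Real.norm_eq_abs, abs_of_nonneg (by positivity)]
    rw [this]
    linarith

private lemma key1 : ∫ u in Ioi (0:ℝ), (1-u)/(1+u)^3 * Real.log (1+u) = -(1/2) := by
  rw [integral_Ioi_of_hasDerivAt_of_tendsto' aux_deriv aux_int aux_tendsto]
  norm_num

theorem stmt17 (β : ℝ) (hβ : 0 < β) :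
    ∫ y : EuclideanSpace ℝ (Fin 2),
      2*β^2 * (‖y‖^(β-2) / (1 + ‖y‖^β)^2) * ((1 - ‖y‖^β)/(1 + ‖y‖^β))
        * Real.log (1 + ‖y‖^β) = -2*Real.pi*β := by
  have hrad := MeasureTheory.integral_fun_norm_addHaar (volume : Measure (EuclideanSpace ℝ (Fin 2)))
    (fun r : ℝ => 2*β^2 * (r^(β-2) / (1 + r^β)^2) * ((1 - r^β)/(1 + r^β)) * Real.log (1 + r^β))
  rw [hrad, finrank_euclideanSpace_fin]
  have hvol : (volume (Metric.ball (0:EuclideanSpace ℝ (Fin 2)) 1)).toReal = π := by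
    rw [EuclideanSpace.volume_ball]
    simp only [Fintype.card_fin]
    rw [show ((2:ℕ):ℝ)/2 + 1 = 2 by norm_num, Real.Gamma_two]
    rw [Real.sq_sqrt Real.pi_nonneg]
    simp [ENNReal.toReal_ofReal Real.pi_nonneg]
  rw [measureReal_def, hvol]
  have hI : ∫ r in Ioi (0:ℝ), r ^ (2-1 : ℕ) •
      (2*β^2 * (r^(β-2) / (1 + r^β)^2) * ((1 - r^β)/(1 + r^β)) * Real.log (1 + r^β)) = -β := by
    have hcongr : ∫ r in Ioi (0:ℝ), r ^ (2-1 : ℕ) •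
        (2*β^2 * (r^(β-2) / (1 + r^β)^2) * ((1 - r^β)/(1 + r^β)) * Real.log (1 + r^β))
        = ∫ r in Ioi (0:ℝ), (β * r^(β-1)) •
          (2*β*((1 - r^β)/(1 + r^β)^3 * Real.log (1 + r^β))) := by
      apply setIntegral_congr_fun measurableSet_Ioi
      intro r hr
      have h0 : (0:ℝ) < r := hr
      have hp : (0:ℝ) < 1 + r^β := by positivity
      have h2 : r ^ (β-1) = r * r^(β-2) := by
        rw [show β-1 = 1+(β-2) by ring, Real.rpow_add h0, Real.rpow_one]
      simp only [smul_eq_mul, pow_one, h2]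
      field_simp
      ring
    rw [hcongr, integral_comp_rpow_Ioi_of_pos (g := fun u => 2*β*((1 - u)/(1 + u)^3 * Real.log (1 + u))) hβ, integral_const_mul, key1]
    ring
  rw [hI]
  simp only [smul_eq_mul, nsmul_eq_mul]
  push_cast
  ring
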